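/- For partitions λ, μ and a sequence of positive integers α = (α_1,…,α_s), the coefficient of m_λ in m_μ · e_{α_1}⋯e_{α_s} equals the number of e-brick tabloids of shape λ and extended content (μ;α): tilings as in the h-brick tabloid case (ℓ(μ) horizontal 0-bricks of lengths the parts of μ, and α_i unit bricks labeled i for each i) covering each cell of the diagram of λ exactly once, with the requirement that within each row all bricks carry distinct labels. -/

import Mathlib

open Classical

/-- The elementary symmetric function `e_n`: the sum of all square-free monomials of
degree `n`. -/
noncomputable def eS (n : ℕ) : MvPowerSeries ℕ ℚ :=
  fun d => if (∀ j, d j ≤ 1) ∧ d.sum (fun _ m => m) = n then 1 else 0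

/-- The monomial symmetric function `m_μ`: the sum of all distinct monomials whose
multiset of (nonzero) exponents is `μ`. -/
noncomputable def mS (mu : Multiset ℕ) : MvPowerSeries ℕ ℚ :=
  fun d => if d.support.val.map (fun j => d j) = mu then 1 else 0

/-- An e-brick tabloid of shape `L` (row `j` has `L j` cells) and extended content
`(μ; α)` is encoded by: `g : ℕ →₀ ℕ`, the length of the at most one `0`-labeled
brick in row `j` (`0` = none), and `c : Fin s → (ℕ →₀ ℕ)`, where `c i j` counts
the unit bricks labeled `i+1` in row `j`.  There are `α i` unit bricks labeled
`i+1` in total, the `0`-brick lengths form the multiset `μ`, the bricks in each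
row exactly cover it, and all bricks in a row carry distinct labels
(`c i j ≤ 1`). -/
theorem coeff_m_mul_prod_e_eq_card_eBrickTabloids
    (lam mu : Multiset ℕ) (hlam : 0 ∉ lam) (hmu : 0 ∉ mu)
    (s : ℕ) (α : Fin s → ℕ) (hα : ∀ i, 0 < α i)
    (L : ℕ →₀ ℕ) (hL : L.support.val.map (fun j => L j) = lam) :
    MvPowerSeries.coeff L (mS mu * ∏ i, eS (α i))
      = (Nat.card {T : (ℕ →₀ ℕ) × (Fin s → ℕ →₀ ℕ) //
          T.1.support.val.map (fun j => T.1 j) = mu ∧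
          (∀ i, (T.2 i).sum (fun _ c => c) = α i) ∧
          (∀ i j, T.2 i j ≤ 1) ∧
          ∀ j, T.1 j + ∑ i, T.2 i j = L j} : ℚ) := by
  classical
  set F : Finset ((_ : (ℕ →₀ ℕ) × (ℕ →₀ ℕ)) × (Fin s →₀ (ℕ →₀ ℕ))) :=
    ((Finset.HasAntidiagonal.antidiagonal L).sigma
        (fun p => Finset.finsuppAntidiag Finset.univ p.2)).filter
      (fun x => (Multiset.map (fun j => x.1.1 j) x.1.1.support.val = mu) ∧
        ∀ i : Fin s, (∀ j, x.2 i j ≤ 1) ∧ (x.2 i).sum (fun _ m => m) = α i) with hF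
  have h1 : MvPowerSeries.coeff L (mS mu * ∏ i, eS (α i)) = (F.card : ℚ) := by
    rw [MvPowerSeries.coeff_mul]
    have : ∀ p ∈ Finset.HasAntidiagonal.antidiagonal L,
        MvPowerSeries.coeff p.1 (mS mu) *
          MvPowerSeries.coeff p.2 (∏ i, eS (α i)) =
        ∑ l ∈ Finset.finsuppAntidiag Finset.univ p.2,
          if (Multiset.map (fun j => p.1 j) p.1.support.val = mu) ∧
            ∀ i : Fin s, (∀ j, l i j ≤ 1) ∧ (l i).sum (fun _ m => m) = α i
          then (1 : ℚ) else 0 := by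
      intro p _
      rw [MvPowerSeries.coeff_prod, Finset.mul_sum]
      apply Finset.sum_congr rfl
      intro l _
      have he : ∀ i : Fin s, MvPowerSeries.coeff (l i) (eS (α i)) =
          if (∀ j, l i j ≤ 1) ∧ (l i).sum (fun _ m => m) = α i then (1:ℚ) else 0 := by
        intro i; rfl
      have hm : MvPowerSeries.coeff p.1 (mS mu) =
          if Multiset.map (fun j => p.1 j) p.1.support.val = mu then (1:ℚ) else 0 := rfl
      rw [hm]
      simp only [he, Finset.prod_boole, Finset.mem_univ, forall_true_left,
        ite_zero_mul_ite_zero, one_mul]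
    rw [Finset.sum_congr rfl this, Finset.sum_sigma', Finset.sum_boole, hF]
  rw [h1]
  congr 1
  rw [← Nat.card_eq_finsetCard]
  refine (Nat.card_congr ?_).symm
  refine Equiv.mk
    (fun T => ⟨⟨(T.1.1, ∑ i, (Finsupp.onFinset Finset.univ T.1.2
        (fun _ _ => Finset.mem_univ _)) i),
      Finsupp.onFinset Finset.univ T.1.2 (fun _ _ => Finset.mem_univ _)⟩, ?_⟩)
    (fun x => ⟨(x.1.1.1, fun i => x.1.2 i), ?_⟩) ?_ ?_
  · -- membership in F
    obtain ⟨⟨g, c⟩, hmu', hsum, hle, hcov⟩ := T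
    rw [hF, Finset.mem_filter, Finset.mem_sigma, Finset.HasAntidiagonal.mem_antidiagonal,
      Finset.mem_finsuppAntidiag]
    refine ⟨⟨?_, rfl, Finset.subset_univ _⟩, hmu', fun i => ?_⟩
    · ext j
      simp only [Finsupp.add_apply, Finsupp.finset_sum_apply, Finsupp.onFinset_apply]
      exact hcov j
    · constructor
      · intro j
        simpa only [Finsupp.onFinset_apply] using hle i j
      · simpa only [Finsupp.onFinset_apply] using hsum i
  · -- membership in subtype conditions
    obtain ⟨⟨⟨g, h⟩, l⟩, hx⟩ := x
    simp only [hF, Finset.mem_filter, Finset.mem_sigma, Finset.HasAntidiagonal.mem_antidiagonal,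
      Finset.mem_finsuppAntidiag] at hx
    obtain ⟨⟨hgh, hlh, -⟩, hmu', hcond⟩ := hx
    refine ⟨hmu', fun i => (hcond i).2, fun i j => (hcond i).1 j, fun j => ?_⟩
    have hgh' : g + ∑ i, l i = L := by rw [← hlh] at hgh; exact hgh
    have : (g + ∑ i, l i) j = L j := by rw [hgh']
    simpa [Finsupp.add_apply, Finsupp.finset_sum_apply] using this
  · -- left inverse
    rintro ⟨⟨g, c⟩, hT⟩
    apply Subtype.ext
    simp only [Finsupp.onFinset_apply]
  · -- right inverse
    rintro ⟨⟨⟨g, h⟩, l⟩, hx⟩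
    apply Subtype.ext
    have hl : Finsupp.onFinset Finset.univ (fun i => l i)
        (fun _ _ => Finset.mem_univ _) = l := by
      ext i; simp
    have hh : (∑ i, l i) = h := by
      rw [hF, Finset.mem_filter, Finset.mem_sigma,
        Finset.mem_finsuppAntidiag] at hx
      exact hx.1.2.1
    simp only [hl, hh]
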